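/- For every n ≥ 15, N(K3, S^=(n)) > N(K3, S^+(n)) > N(K3, S(n)). -/

import Mathlib

open SimpleGraph

/-- The number of triangles (copies of `K₃`) in a graph `G`, i.e. `N(K₃, G)`. -/
noncomputable def triangleCount {V : Type*} (G : SimpleGraph V) : ℕ :=
  Set.ncard {s : Finset V | G.IsNClique 3 s}

/-- `G` contains a subgraph isomorphic to `H`. -/
def Contains {W V : Type*} (H : SimpleGraph W) (G : SimpleGraph V) : Prop :=
  ∃ f : H →g G, Function.Injective f

/-- `G` is `H`-free: it contains no subgraph isomorphic to `H`. -/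
def Free {W V : Type*} (H : SimpleGraph W) (G : SimpleGraph V) : Prop :=
  ¬ Contains H G

/-- The expansion `F^△` of a graph `F`: each edge `uv` of `F` is replaced by a triangle
`u v w_{uv}` where the new vertices `w_{uv}` are pairwise distinct and outside `V(F)`. -/
def expansion {V : Type*} (F : SimpleGraph V) : SimpleGraph (V ⊕ F.edgeSet) :=
  SimpleGraph.fromRel (fun a b =>
    (∃ u v, a = Sum.inl u ∧ b = Sum.inl v ∧ F.Adj u v) ∨
    (∃ u, ∃ e : F.edgeSet, a = Sum.inl u ∧ b = Sum.inr e ∧ u ∈ (e : Sym2 V)))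

/-- `C₄^△`, the expansion of the 4-edge cycle: a graph on 8 vertices. -/
def C4expansion : SimpleGraph ((Fin 4) ⊕ (SimpleGraph.cycleGraph 4).edgeSet) :=
  expansion (SimpleGraph.cycleGraph 4)

/-- The generalized Turán number `ex(n, K₃, H)`: the maximum number of triangles in an
`H`-free graph on `n` vertices. -/
noncomputable def exTriangles (n : ℕ) {W : Type*} (H : SimpleGraph W) : ℕ :=
  sSup {k | ∃ G : SimpleGraph (Fin n), _root_.Free H G ∧ triangleCount G = k}

/-- `T(n)`: the complete bipartite graph on `Fin n` with parts
`X = {v : v < ⌊n/2⌋}` (of size `⌊n/2⌋`) and `Y = {v : v ≥ ⌊n/2⌋}` (of size `⌈n/2⌉`). -/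
def Tgraph (n : ℕ) : SimpleGraph (Fin n) :=
  SimpleGraph.fromRel (fun u v => u.val < n / 2 ∧ n / 2 ≤ v.val)

/-- `T⁺(n)`: the graph `T(n)` with one extra edge (between vertices `0` and `1`) added
inside the part `X`. -/
def TgraphPlus (n : ℕ) : SimpleGraph (Fin n) :=
  SimpleGraph.fromRel (fun u v =>
    (u.val < n / 2 ∧ n / 2 ≤ v.val) ∨ (u.val = 0 ∧ v.val = 1))

/-- `T⁼(n)`: the graph obtained from `T(n)` by adding the edge `e₁ = {0,1}` inside `X`,
adding the edge `e₂ = {⌊n/2⌋, ⌊n/2⌋+1}` inside `Y`, and deleting the perfect matching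
`{0,⌊n/2⌋}, {1,⌊n/2⌋+1}` between the endpoints of `e₁` and of `e₂`. -/
def TgraphEq (n : ℕ) : SimpleGraph (Fin n) :=
  SimpleGraph.fromRel (fun u v =>
    (u.val < n / 2 ∧ n / 2 ≤ v.val ∧
      ¬(u.val = 0 ∧ v.val = n / 2) ∧ ¬(u.val = 1 ∧ v.val = n / 2 + 1))
    ∨ (u.val = 0 ∧ v.val = 1) ∨ (u.val = n / 2 ∧ v.val = n / 2 + 1))

/-- The join `K₁ ⋈ H` of a single new vertex with the graph `H`. -/
def joinK1 {V : Type*} (H : SimpleGraph V) : SimpleGraph (Option V) :=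
  SimpleGraph.fromRel (fun u v =>
    u = none ∨ ∃ a b, u = some a ∧ v = some b ∧ H.Adj a b)

/-- `S(n) = K₁ ⋈ T(n-1)`. -/
def Sgraph (n : ℕ) : SimpleGraph (Option (Fin (n - 1))) := joinK1 (Tgraph (n - 1))

/-- `S⁺(n) = K₁ ⋈ T⁺(n-1)`. -/
def SgraphPlus (n : ℕ) : SimpleGraph (Option (Fin (n - 1))) := joinK1 (TgraphPlus (n - 1))

/-- `S⁼(n) = K₁ ⋈ T⁼(n-1)`. -/
def SgraphEq (n : ℕ) : SimpleGraph (Option (Fin (n - 1))) := joinK1 (TgraphEq (n - 1))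

/-- `d_G(uv)`: the number of triangles of `G` containing the edge `uv`, i.e. the number of
common neighbors of `u` and `v`. -/
noncomputable def edgeTriangleDeg {V : Type*} (G : SimpleGraph V) (u v : V) : ℕ :=
  {w : V | G.Adj u w ∧ G.Adj v w}.ncard

/-- `e_G(A, B)`: the number of edges of `G` with one endpoint in `A` and the other in `B`
(for disjoint `A`, `B`). -/
noncomputable def crossEdges {V : Type*} (G : SimpleGraph V) (A B : Set V) : ℕ :=
  {p : V × V | p.1 ∈ A ∧ p.2 ∈ B ∧ G.Adj p.1 p.2}.ncard


section Aux
open Finset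

noncomputable def eCnt {V : Type*} (G : SimpleGraph V) : ℕ :=
  Set.ncard {s : Finset V | G.IsNClique 2 s}

lemma ncard_setOf_filter {α : Type*} [Fintype α] (P : Finset α → Prop) [DecidablePred P] :
    {s : Finset α | P s}.ncard = (Finset.univ.filter P).card := by
  rw [Set.ncard_eq_toFinset_card', Set.toFinset_setOf]

lemma is2Clique_iff {V : Type*} [DecidableEq V] (G : SimpleGraph V) (s : Finset V) :
    G.IsNClique 2 s ↔ ∃ a b, G.Adj a b ∧ s = {a, b} := by
  rw [isNClique_iff]
  constructor
  · rintro ⟨hc, h2⟩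
    obtain ⟨a, b, hab, rfl⟩ := Finset.card_eq_two.mp h2
    exact ⟨a, b, hc (by simp) (by simp) hab, rfl⟩
  · rintro ⟨a, b, hab, rfl⟩
    refine ⟨?_, Finset.card_pair hab.ne⟩
    intro x hx y hy hne
    simp only [coe_insert, coe_singleton, Set.mem_insert_iff, Set.mem_singleton_iff] at hx hy
    rcases hx with rfl | rfl <;> rcases hy with rfl | rfl
    · exact absurd rfl hne
    · exact hab
    · exact hab.symm
    · exact absurd rfl hne

variable {V : Type*} [DecidableEq V] (H : SimpleGraph V)

lemma joinK1_adj_none (a : V) : (joinK1 H).Adj none (some a) := by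
  rw [joinK1, fromRel_adj]
  exact ⟨by simp, Or.inl (Or.inl rfl)⟩

lemma joinK1_adj_some {a b : V} : (joinK1 H).Adj (some a) (some b) ↔ H.Adj a b := by
  rw [joinK1, fromRel_adj]
  constructor
  · rintro ⟨hne, (h | ⟨c, d, hc, hd, h⟩) | (h | ⟨c, d, hc, hd, h⟩)⟩
    · simp at h
    · cases hc; cases hd; assumption
    · simp at h
    · cases hc; cases hd; exact h.symm
  · intro h
    exact ⟨by simp [h.ne], Or.inl (Or.inr ⟨a, b, rfl, rfl, h⟩)⟩

lemma opt_preimage_insert (t : Finset V) :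
    (insert none (t.image some)).preimage some (Option.some_injective V).injOn = t := by
  ext a; simp

lemma opt_preimage_image (t : Finset V) :
    (t.image some).preimage some (Option.some_injective V).injOn = t := by
  ext a; simp

lemma opt_insert_preimage {s : Finset (Option V)} (hs : none ∈ s) :
    insert none ((s.preimage some (Option.some_injective V).injOn).image some) = s := by
  ext o
  cases o with
  | none => simp [hs]
  | some a => simp

lemma opt_image_preimage {s : Finset (Option V)} (hs : none ∉ s) :
    (s.preimage some (Option.some_injective V).injOn).image some = s := by
  ext o
  cases o with
  | none => simp [hs]
  | some a => simp

lemma isNClique3_insert_iff (t : Finset V) :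
    (joinK1 H).IsNClique 3 (insert none (t.image some)) ↔ H.IsNClique 2 t := by
  rw [isNClique_iff, isNClique_iff]
  have hcard : (insert none (t.image some)).card = t.card + 1 := by
    rw [Finset.card_insert_of_notMem (by simp), Finset.card_image_of_injective _ (Option.some_injective V)]
  constructor
  · rintro ⟨hc, h3⟩
    refine ⟨?_, by omega⟩
    intro x hx y hy hne
    have hx' : some x ∈ (insert none (t.image some) : Finset (Option V)) :=
      Finset.mem_insert_of_mem (Finset.mem_image_of_mem _ hx)
    have hy' : some y ∈ (insert none (t.image some) : Finset (Option V)) :=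
      Finset.mem_insert_of_mem (Finset.mem_image_of_mem _ hy)
    exact (joinK1_adj_some H).mp
      (hc (Finset.mem_coe.mpr hx') (Finset.mem_coe.mpr hy') (by simpa using hne))
  · rintro ⟨hc, h2⟩
    refine ⟨?_, by omega⟩
    intro x hx y hy hne
    simp only [coe_insert, Set.mem_insert_iff, coe_image, Set.mem_image, mem_coe] at hx hy
    rcases hx with rfl | ⟨a, ha, rfl⟩ <;> rcases hy with rfl | ⟨b, hb, rfl⟩
    · exact absurd rfl hne
    · exact joinK1_adj_none H b
    · exact (joinK1_adj_none H a).symm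
    · exact (joinK1_adj_some H).mpr (hc ha hb (by simpa using hne))

lemma isNClique3_image_iff (t : Finset V) :
    (joinK1 H).IsNClique 3 (t.image some) ↔ H.IsNClique 3 t := by
  rw [isNClique_iff, isNClique_iff, Finset.card_image_of_injective _ (Option.some_injective V)]
  constructor
  · rintro ⟨hc, h3⟩
    refine ⟨?_, h3⟩
    intro x hx y hy hne
    exact (joinK1_adj_some H).mp (hc (x := some x) (by simpa using hx) (y := some y)
      (by simpa using hy) (by simpa using hne))
  · rintro ⟨hc, h3⟩
    refine ⟨?_, h3⟩
    intro x hx y hy hne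
    simp only [coe_image, Set.mem_image, mem_coe] at hx hy
    obtain ⟨a, ha, rfl⟩ := hx
    obtain ⟨b, hb, rfl⟩ := hy
    exact (joinK1_adj_some H).mpr (hc ha hb (by simpa using hne))

lemma triangleCount_joinK1 [Fintype V] :
    triangleCount (joinK1 H) = eCnt H + triangleCount H := by
  classical
  rw [triangleCount, triangleCount, eCnt, ncard_setOf_filter, ncard_setOf_filter,
    ncard_setOf_filter]
  have hsplit : (univ.filter fun s : Finset (Option V) => (joinK1 H).IsNClique 3 s)
      = (univ.filter fun s => (joinK1 H).IsNClique 3 s ∧ none ∈ s)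
        ∪ (univ.filter fun s => (joinK1 H).IsNClique 3 s ∧ none ∉ s) := by
    ext s; by_cases h : none ∈ s <;> simp [h]
  have hdisj : Disjoint (univ.filter fun s : Finset (Option V) => (joinK1 H).IsNClique 3 s ∧ none ∈ s)
      (univ.filter fun s => (joinK1 H).IsNClique 3 s ∧ none ∉ s) := by
    rw [Finset.disjoint_left]
    intro s hs hs'
    simp only [mem_filter] at hs hs'
    exact hs'.2.2 hs.2.2
  rw [hsplit, card_union_of_disjoint hdisj]
  congr 1
  · refine Finset.card_bij' (i := fun s _ => s.preimage some (Option.some_injective V).injOn)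
      (j := fun t _ => insert none (t.image some)) ?_ ?_ ?_ ?_
    · intro s hs
      simp only [mem_filter] at hs ⊢
      refine ⟨mem_univ _, ?_⟩
      rw [← isNClique3_insert_iff, opt_insert_preimage hs.2.2]
      exact hs.2.1
    · intro t ht
      simp only [mem_filter] at ht ⊢
      exact ⟨mem_univ _, (isNClique3_insert_iff H t).mpr ht.2, by simp⟩
    · intro s hs
      simp only [mem_filter] at hs
      exact opt_insert_preimage hs.2.2
    · intro t ht
      exact opt_preimage_insert t
  · refine Finset.card_bij' (i := fun s _ => s.preimage some (Option.some_injective V).injOn)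
      (j := fun t _ => t.image some) ?_ ?_ ?_ ?_
    · intro s hs
      simp only [mem_filter] at hs ⊢
      refine ⟨mem_univ _, ?_⟩
      rw [← isNClique3_image_iff, opt_image_preimage hs.2.2]
      exact hs.2.1
    · intro t ht
      simp only [mem_filter] at ht ⊢
      exact ⟨mem_univ _, (isNClique3_image_iff H t).mpr ht.2, by simp⟩
    · intro s hs
      simp only [mem_filter] at hs
      exact opt_image_preimage hs.2.2
    · intro t ht
      exact opt_preimage_image t

section TGraphs
variable {m : ℕ}

lemma tAdj_iff (u v : Fin m) : (Tgraph m).Adj u v ↔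
    ((u.val < m / 2 ∧ m / 2 ≤ v.val) ∨ (v.val < m / 2 ∧ m / 2 ≤ u.val)) := by
  rw [Tgraph, fromRel_adj]
  constructor
  · rintro ⟨-, h⟩; exact h
  · intro h
    refine ⟨?_, h⟩
    rintro rfl
    omega

lemma tPlusAdj_iff (u v : Fin m) : (TgraphPlus m).Adj u v ↔
    ((u.val < m / 2 ∧ m / 2 ≤ v.val) ∨ (v.val < m / 2 ∧ m / 2 ≤ u.val)
      ∨ (u.val = 0 ∧ v.val = 1) ∨ (v.val = 0 ∧ u.val = 1)) := by
  rw [TgraphPlus, fromRel_adj]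
  constructor
  · rintro ⟨-, h⟩; omega
  · intro h
    refine ⟨?_, by omega⟩
    rintro rfl
    omega

lemma tEqAdj_iff (u v : Fin m) : (TgraphEq m).Adj u v ↔
    ((u.val < m / 2 ∧ m / 2 ≤ v.val ∧
        ¬(u.val = 0 ∧ v.val = m / 2) ∧ ¬(u.val = 1 ∧ v.val = m / 2 + 1))
      ∨ (v.val < m / 2 ∧ m / 2 ≤ u.val ∧
        ¬(v.val = 0 ∧ u.val = m / 2) ∧ ¬(v.val = 1 ∧ u.val = m / 2 + 1))
      ∨ (u.val = 0 ∧ v.val = 1) ∨ (v.val = 0 ∧ u.val = 1)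
      ∨ (u.val = m / 2 ∧ v.val = m / 2 + 1) ∨ (v.val = m / 2 ∧ u.val = m / 2 + 1)) := by
  rw [TgraphEq, fromRel_adj]
  constructor
  · rintro ⟨-, h⟩; omega
  · intro h
    refine ⟨?_, by omega⟩
    rintro rfl
    omega

lemma pair_eq_vals {u v x y : Fin m} (h : ({u, v} : Finset (Fin m)) = {x, y}) :
    (u.val = x.val ∨ u.val = y.val) ∧ (v.val = x.val ∨ v.val = y.val) ∧
    (x.val = u.val ∨ x.val = v.val) ∧ (y.val = u.val ∨ y.val = v.val) := by
  have h1 : u ∈ ({x, y} : Finset (Fin m)) := h ▸ (by simp)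
  have h2 : v ∈ ({x, y} : Finset (Fin m)) := h ▸ (by simp)
  have h3 : x ∈ ({u, v} : Finset (Fin m)) := h.symm ▸ (by simp)
  have h4 : y ∈ ({u, v} : Finset (Fin m)) := h.symm ▸ (by simp)
  simp only [mem_insert, mem_singleton] at h1 h2 h3 h4
  refine ⟨?_, ?_, ?_, ?_⟩ <;>
    [rcases h1 with h | h; rcases h2 with h | h; rcases h3 with h | h; rcases h4 with h | h] <;>
    simp [h]

lemma tri_T (hm : 14 ≤ m) : triangleCount (Tgraph m) = 0 := by
  have hempty : {s : Finset (Fin m) | (Tgraph m).IsNClique 3 s} = ∅ := by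
    ext s
    simp only [Set.mem_setOf_eq, Set.mem_empty_iff_false, iff_false]
    intro h
    obtain ⟨x, y, z, h1, h2, h3, -⟩ := is3Clique_iff.mp h
    rw [tAdj_iff] at h1 h2 h3
    omega
  rw [triangleCount, hempty, Set.ncard_empty]

lemma not2T {x y : Fin m} (h : (x.val < m / 2 ∧ y.val < m / 2) ∨ (m / 2 ≤ x.val ∧ m / 2 ≤ y.val)) :
    ¬ (Tgraph m).IsNClique 2 {x, y} := by
  rw [is2Clique_iff]
  rintro ⟨u, v, hadj, hpair⟩
  rw [tAdj_iff] at hadj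
  have hv := pair_eq_vals hpair.symm
  omega

lemma eCnt_plus (hm : 14 ≤ m) : eCnt (TgraphPlus m) = eCnt (Tgraph m) + 1 := by
  classical
  rw [eCnt, eCnt, ncard_setOf_filter, ncard_setOf_filter]
  set x0 : Fin m := ⟨0, by omega⟩ with hx0
  set x1 : Fin m := ⟨1, by omega⟩ with hx1
  have e0 : x0.val = 0 := rfl
  have e1 : x1.val = 1 := rfl
  have hset : (univ.filter fun s => (TgraphPlus m).IsNClique 2 s)
      = insert {x0, x1} (univ.filter fun s => (Tgraph m).IsNClique 2 s) := by
    ext s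
    simp only [mem_filter, mem_univ, true_and, mem_insert, is2Clique_iff]
    constructor
    · rintro ⟨u, v, hadj, rfl⟩
      rw [tPlusAdj_iff] at hadj
      rcases hadj with h | h | h | h
      · exact Or.inr ⟨u, v, (tAdj_iff u v).mpr (Or.inl h), rfl⟩
      · exact Or.inr ⟨u, v, (tAdj_iff u v).mpr (Or.inr h), rfl⟩
      · left
        rw [show u = x0 from Fin.ext (by omega), show v = x1 from Fin.ext (by omega)]
      · left
        rw [show u = x1 from Fin.ext (by omega), show v = x0 from Fin.ext (by omega),
          Finset.pair_comm]
    · rintro (rfl | ⟨u, v, hadj, rfl⟩)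
      · exact ⟨x0, x1, (tPlusAdj_iff x0 x1).mpr (by omega), rfl⟩
      · rw [tAdj_iff] at hadj
        exact ⟨u, v, (tPlusAdj_iff u v).mpr (by omega), rfl⟩
  rw [hset, card_insert_of_notMem]
  simp only [mem_filter, mem_univ, true_and]
  exact not2T (by omega)

set_option maxHeartbeats 1000000 in
lemma eCnt_eq_ge (hm : 14 ≤ m) : eCnt (Tgraph m) ≤ eCnt (TgraphEq m) := by
  classical
  rw [eCnt, eCnt, ncard_setOf_filter, ncard_setOf_filter]
  set x0 : Fin m := ⟨0, by omega⟩ with hx0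
  set x1 : Fin m := ⟨1, by omega⟩ with hx1
  set xa : Fin m := ⟨m / 2, by omega⟩ with hxa
  set xa1 : Fin m := ⟨m / 2 + 1, by omega⟩ with hxa1
  have e0 : x0.val = 0 := rfl
  have e1 : x1.val = 1 := rfl
  have ea : xa.val = m / 2 := rfl
  have ea1 : xa1.val = m / 2 + 1 := rfl
  apply Finset.card_le_card_of_injOn
    (f := fun s => if s = {x0, xa} then {x0, x1} else if s = {x1, xa1} then {xa, xa1} else s)
  · intro s hs
    simp only [coe_filter, mem_filter, mem_univ, true_and, Set.mem_setOf_eq] at hs ⊢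
    split_ifs with h1 h2
    · exact (is2Clique_iff _ _).mpr ⟨x0, x1, (tEqAdj_iff x0 x1).mpr (by omega), rfl⟩
    · exact (is2Clique_iff _ _).mpr ⟨xa, xa1, (tEqAdj_iff xa xa1).mpr (by omega), rfl⟩
    · obtain ⟨u, v, hadj, rfl⟩ := (is2Clique_iff _ _).mp hs
      rw [tAdj_iff] at hadj
      refine (is2Clique_iff _ _).mpr ⟨u, v, (tEqAdj_iff u v).mpr ?_, rfl⟩
      have hne1 : ¬(u.val = 0 ∧ v.val = m / 2) := by
        rintro ⟨ha, hb⟩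
        exact h1 (by rw [show u = x0 from Fin.ext (by omega), show v = xa from Fin.ext (by omega)])
      have hne1' : ¬(v.val = 0 ∧ u.val = m / 2) := by
        rintro ⟨ha, hb⟩
        exact h1 (by rw [show u = xa from Fin.ext (by omega), show v = x0 from Fin.ext (by omega),
          Finset.pair_comm])
      have hne2 : ¬(u.val = 1 ∧ v.val = m / 2 + 1) := by
        rintro ⟨ha, hb⟩
        exact h2 (by rw [show u = x1 from Fin.ext (by omega),
          show v = xa1 from Fin.ext (by omega)])
      have hne2' : ¬(v.val = 1 ∧ u.val = m / 2 + 1) := by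
        rintro ⟨ha, hb⟩
        exact h2 (by rw [show u = xa1 from Fin.ext (by omega),
          show v = x1 from Fin.ext (by omega), Finset.pair_comm])
      omega
  · intro s hs t ht heq
    simp only [coe_filter, mem_univ, true_and, Set.mem_setOf_eq] at hs ht
    simp only at heq
    split_ifs at heq
    all_goals first
      | exact heq
      | exact Eq.trans ‹s = {x0, xa}› (Eq.symm ‹t = {x0, xa}›)
      | exact Eq.trans ‹s = {x1, xa1}› (Eq.symm ‹t = {x1, xa1}›)
      | (exfalso; have := pair_eq_vals heq; omega)
      | (exfalso; rw [← heq] at ht; exact not2T (by omega) ht)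
      | (exfalso; rw [heq] at hs; exact not2T (by omega) hs)

lemma card_filter_fin_val (m : ℕ) (P : ℕ → Prop) [DecidablePred P] :
    (univ.filter fun w : Fin m => P w.val).card = ((Finset.range m).filter P).card := by
  apply Finset.card_bij (i := fun w _ => w.val)
  · intro w hw
    simp only [mem_filter, mem_univ, true_and, mem_range] at *
    exact ⟨w.isLt, hw⟩
  · intro w1 _ w2 _ h
    exact Fin.ext h
  · intro x hx
    simp only [mem_filter, mem_range] at hx
    exact ⟨⟨x, hx.1⟩, by simp [hx.2], rfl⟩


set_option maxHeartbeats 4000000 in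
lemma tri_plus_le (hm : 14 ≤ m) : triangleCount (TgraphPlus m) ≤ m - m / 2 := by
  classical
  rw [triangleCount, ncard_setOf_filter]
  obtain ⟨x0, e0⟩ : ∃ x : Fin m, x.val = 0 := ⟨⟨0, by omega⟩, rfl⟩
  obtain ⟨x1, e1⟩ : ∃ x : Fin m, x.val = 1 := ⟨⟨1, by omega⟩, rfl⟩
  have hle : (univ.filter fun s => (TgraphPlus m).IsNClique 3 s).card
      ≤ (univ.filter fun w : Fin m => m / 2 ≤ w.val).card := by
    apply Finset.card_le_card_of_surjOn (fun w => ({x0, x1, w} : Finset (Fin m)))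
    intro s hs
    simp only [coe_filter, mem_univ, true_and, Set.mem_setOf_eq] at hs
    simp only [Set.mem_image, coe_filter, mem_univ, true_and, Set.mem_setOf_eq]
    obtain ⟨u, v, w, h1, h2, h3, rfl⟩ := is3Clique_iff.mp hs
    have d1 : u.val ≠ v.val := fun h => h1.ne (Fin.ext h)
    have d2 : u.val ≠ w.val := fun h => h2.ne (Fin.ext h)
    have d3 : v.val ≠ w.val := fun h => h3.ne (Fin.ext h)
    rw [tPlusAdj_iff] at h1 h2 h3
    have key : (u.val = 0 ∧ v.val = 1 ∧ m / 2 ≤ w.val)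
        ∨ (u.val = 0 ∧ w.val = 1 ∧ m / 2 ≤ v.val)
        ∨ (v.val = 0 ∧ u.val = 1 ∧ m / 2 ≤ w.val)
        ∨ (v.val = 0 ∧ w.val = 1 ∧ m / 2 ≤ u.val)
        ∨ (w.val = 0 ∧ u.val = 1 ∧ m / 2 ≤ v.val)
        ∨ (w.val = 0 ∧ v.val = 1 ∧ m / 2 ≤ u.val) := by
      clear hs
      rcases h1 with h1|h1|h1|h1 <;> rcases h2 with h2|h2|h2|h2 <;>
        rcases h3 with h3|h3|h3|h3 <;> first | (exfalso; omega) | tauto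
    rcases key with h | h | h | h | h | h
    · exact ⟨w, h.2.2, by rw [show x0 = u from Fin.ext (by omega),
        show x1 = v from Fin.ext (by omega)]⟩
    · exact ⟨v, h.2.2, by rw [show x0 = u from Fin.ext (by omega),
        show x1 = w from Fin.ext (by omega)]; ext z; simp; tauto⟩
    · exact ⟨w, h.2.2, by rw [show x0 = v from Fin.ext (by omega),
        show x1 = u from Fin.ext (by omega)]; ext z; simp; tauto⟩
    · exact ⟨u, h.2.2, by rw [show x0 = v from Fin.ext (by omega),
        show x1 = w from Fin.ext (by omega)]; ext z; simp; tauto⟩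
    · exact ⟨v, h.2.2, by rw [show x0 = w from Fin.ext (by omega),
        show x1 = u from Fin.ext (by omega)]; ext z; simp; tauto⟩
    · exact ⟨u, h.2.2, by rw [show x0 = w from Fin.ext (by omega),
        show x1 = v from Fin.ext (by omega)]; ext z; simp; tauto⟩
  refine hle.trans ?_
  rw [card_filter_fin_val]
  have h2 : (Finset.range m).filter (fun x => m / 2 ≤ x) = Finset.Ico (m / 2) m := by
    ext x; simp only [mem_filter, mem_range, mem_Ico]; omega
  rw [h2, Nat.card_Ico]

set_option maxHeartbeats 1000000 in
lemma tri_eq_ge (hm : 14 ≤ m) : m - 4 ≤ triangleCount (TgraphEq m) := by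
  classical
  rw [triangleCount, ncard_setOf_filter]
  obtain ⟨x0, e0⟩ : ∃ x : Fin m, x.val = 0 := ⟨⟨0, by omega⟩, rfl⟩
  obtain ⟨x1, e1⟩ : ∃ x : Fin m, x.val = 1 := ⟨⟨1, by omega⟩, rfl⟩
  obtain ⟨xa, ea⟩ : ∃ x : Fin m, x.val = m / 2 := ⟨⟨m / 2, by omega⟩, rfl⟩
  obtain ⟨xa1, ea1⟩ : ∃ x : Fin m, x.val = m / 2 + 1 := ⟨⟨m / 2 + 1, by omega⟩, rfl⟩
  have hle : (univ.filter fun w : Fin m => (2 ≤ w.val ∧ w.val < m / 2) ∨ (m / 2 + 2 ≤ w.val)).card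
      ≤ (univ.filter fun s => (TgraphEq m).IsNClique 3 s).card := by
    apply Finset.card_le_card_of_injOn
      (f := fun w => if w.val < m / 2 then ({w, xa, xa1} : Finset (Fin m)) else {x0, x1, w})
    · intro w hw
      simp only [coe_filter, mem_filter, mem_univ, true_and, Set.mem_setOf_eq] at hw ⊢
      split_ifs with h
      · refine is3Clique_iff.mpr ⟨w, xa, xa1, (tEqAdj_iff _ _).mpr (by omega),
          (tEqAdj_iff _ _).mpr (by omega), (tEqAdj_iff _ _).mpr (by omega), rfl⟩
      · refine is3Clique_iff.mpr ⟨x0, x1, w, (tEqAdj_iff _ _).mpr (by omega),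
          (tEqAdj_iff _ _).mpr (by omega), (tEqAdj_iff _ _).mpr (by omega), rfl⟩
    · intro w hw w' hw' heq
      simp only [coe_filter, mem_univ, true_and, Set.mem_setOf_eq] at hw hw'
      simp only at heq
      split_ifs at heq with h h'
      · have hmem : w ∈ ({w', xa, xa1} : Finset (Fin m)) := heq ▸ (by simp)
        simp only [mem_insert, mem_singleton] at hmem
        rcases hmem with h'' | h'' | h'' <;> (try exact h'') <;>
          (have hv := congrArg Fin.val h''; omega)
      · exfalso
        have hmem : xa ∈ ({x0, x1, w'} : Finset (Fin m)) := heq ▸ (by simp)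
        simp only [mem_insert, mem_singleton] at hmem
        rcases hmem with h'' | h'' | h'' <;> (have hv := congrArg Fin.val h''; omega)
      · exfalso
        have hmem : x0 ∈ ({w', xa, xa1} : Finset (Fin m)) := heq ▸ (by simp)
        simp only [mem_insert, mem_singleton] at hmem
        rcases hmem with h'' | h'' | h'' <;> (have hv := congrArg Fin.val h''; omega)
      · have hmem : w ∈ ({x0, x1, w'} : Finset (Fin m)) := heq ▸ (by simp)
        simp only [mem_insert, mem_singleton] at hmem
        rcases hmem with h'' | h'' | h'' <;> (try exact h'') <;>
          (have hv := congrArg Fin.val h''; omega)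
  refine le_trans ?_ hle
  rw [card_filter_fin_val m (fun x => 2 ≤ x ∧ x < m / 2 ∨ m / 2 + 2 ≤ x)]
  have hsplit : (Finset.range m).filter (fun x => (2 ≤ x ∧ x < m / 2) ∨ (m / 2 + 2 ≤ x))
      = Finset.Ico 2 (m / 2) ∪ Finset.Ico (m / 2 + 2) m := by
    ext x
    simp only [mem_filter, mem_range, mem_union, mem_Ico]
    omega
  rw [hsplit, card_union_of_disjoint (by
    rw [Finset.disjoint_left]
    intro x hx hx'
    simp only [mem_Ico] at hx hx'
    omega), Nat.card_Ico, Nat.card_Ico]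
  omega

end TGraphs
end Aux

/-- For every `n ≥ 15`, `N(K₃, S⁼(n)) > N(K₃, S⁺(n)) > N(K₃, S(n))`. -/
theorem stmt5 (n : ℕ) (hn : 15 ≤ n) :
    triangleCount (SgraphPlus n) < triangleCount (SgraphEq n) ∧
    triangleCount (Sgraph n) < triangleCount (SgraphPlus n) := by
  have hm : 14 ≤ n - 1 := by omega
  have h1 : triangleCount (Sgraph n)
      = eCnt (Tgraph (n - 1)) + triangleCount (Tgraph (n - 1)) := by
    rw [Sgraph]; exact triangleCount_joinK1 _
  have h2 : triangleCount (SgraphPlus n)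
      = eCnt (TgraphPlus (n - 1)) + triangleCount (TgraphPlus (n - 1)) := by
    rw [SgraphPlus]; exact triangleCount_joinK1 _
  have h3 : triangleCount (SgraphEq n)
      = eCnt (TgraphEq (n - 1)) + triangleCount (TgraphEq (n - 1)) := by
    rw [SgraphEq]; exact triangleCount_joinK1 _
  have hT := tri_T hm
  have hplusE := eCnt_plus hm
  have hplusT := tri_plus_le hm
  have heqE := eCnt_eq_ge hm
  have heqT := tri_eq_ge hm
  have hdiv : (n - 1) / 2 ≥ 7 ∧ (n - 1) / 2 + (n - 1) / 2 ≤ n - 1 := by omega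
  constructor
  · rw [h2, h3, hplusE]
    omega
  · rw [h1, h2, hplusE, hT]
    omega
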